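/- In the polynomial ring F_2[x_1, x_2, x_3, x_4] with the Steenrod algebra action, the monomial x_1^5 x_2^5 x_3^5 x_4^5 is hit, i.e., it lies in the image of the positive-degree Steenrod operations: x_1^5 x_2^5 x_3^5 x_4^5 ∈ Σ_{i>0} Sq^i(F_2[x_1,…,x_4]). -/

import Mathlib

open MvPolynomial

/-- The action of the mod-2 Steenrod squares on F₂[x₁,…,xₙ]: F₂-linear operations
Sq i with Sq 0 = id, Sq 1 xᵢ = xᵢ², Sq k xᵢ = 0 for k ≥ 2, and the Cartan formula.
These properties determine the action uniquely. -/
structure SteenrodAction (n : ℕ) where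
  Sq : ℕ → MvPolynomial (Fin n) (ZMod 2) →ₗ[ZMod 2] MvPolynomial (Fin n) (ZMod 2)
  sq_zero : ∀ p, Sq 0 p = p
  sq_one_var : ∀ i, Sq 1 (X i) = X i ^ 2
  sq_var_eq_zero : ∀ i k, 2 ≤ k → Sq k (X i) = 0
  cartan : ∀ k u v, Sq k (u * v) = ∑ ij ∈ Finset.HasAntidiagonal.antidiagonal k, Sq ij.1 u * Sq ij.2 v

/-- `p` is hit: it lies in the span of the images of the positive-degree Steenrod operations. -/
def SteenrodAction.IsHit {n : ℕ} (A : SteenrodAction n)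
    (p : MvPolynomial (Fin n) (ZMod 2)) : Prop :=
  p ∈ Submodule.span (ZMod 2) {q | ∃ i, 0 < i ∧ ∃ u, q = A.Sq i u}


section
variable (A : SteenrodAction 4)


lemma sq_one_eq_zero (k : ℕ) (hk : 0 < k) : A.Sq k (1 : MvPolynomial (Fin 4) (ZMod 2)) = 0 := by
  induction k using Nat.strong_induction_on with
  | _ k ih =>
    have h := A.cartan k 1 1
    rw [mul_one, Finset.Nat.sum_antidiagonal_eq_sum_range_succ_mk] at h
    obtain ⟨m, rfl⟩ := Nat.exists_eq_succ_of_ne_zero hk.ne'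
    rw [Finset.sum_range_succ, Nat.sub_self, A.sq_zero, mul_one] at h
    rw [Finset.sum_eq_single_of_mem 0 (Finset.mem_range.mpr (Nat.succ_pos m))
      (fun b hb hb0 => by rw [ih b (Finset.mem_range.mp hb) (Nat.pos_of_ne_zero hb0), zero_mul])] at h
    simp only [A.sq_zero, Nat.sub_zero, one_mul] at h
    exact (right_eq_add.mp h)

lemma sq_pow (i : Fin 4) (a k : ℕ) :
    A.Sq k (X i ^ a) = ((a.choose k : ZMod 2)) • X i ^ (a + k) := by
  induction a generalizing k with
  | zero =>
    cases k with
    | zero => simp [A.sq_zero, pow_succ]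
    | succ n => simp [sq_one_eq_zero A (n+1) n.succ_pos, Nat.choose_zero_succ]
  | succ a ih =>
    rw [pow_succ, A.cartan, Finset.Nat.sum_antidiagonal_eq_sum_range_succ_mk]
    cases k with
    | zero => simp [A.sq_zero, pow_succ]
    | succ n =>
      rw [Finset.sum_range_succ, Finset.sum_range_succ]
      rw [Finset.sum_eq_zero (fun j hj => by
        rw [A.sq_var_eq_zero i _ (by have := Finset.mem_range.mp hj; omega), mul_zero]), zero_add]
      rw [show n + 1 - n = 1 by omega, A.sq_one_var, Nat.sub_self, A.sq_zero]
      rw [ih n, ih (n+1), Nat.choose_succ_succ]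
      push_cast
      rw [add_smul, smul_mul_assoc, smul_mul_assoc, ← pow_add, ← pow_succ]
      rw [show a + n + 2 = a + 1 + (n + 1) by omega, show a + (n+1) + 1 = a + 1 + (n+1) by omega]

lemma hit_aux0 : A.Sq 1 (X 0 ^ 4*X 1 ^ 6*X 2 ^ 6*X 3 ^ 3 : MvPolynomial (Fin 4) (ZMod 2)) =
      X 0 ^ 4*X 1 ^ 6*X 2 ^ 6*X 3 ^ 4 := by
  simp only [A.cartan, sq_pow A, Finset.Nat.sum_antidiagonal_eq_sum_range_succ_mk,
    Finset.sum_range_succ, Finset.sum_range_zero,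
    show ((Nat.choose 3 0 : ℕ) : ZMod 2) = 1 from by decide,
    show ((Nat.choose 3 1 : ℕ) : ZMod 2) = 1 from by decide,
    show ((Nat.choose 4 0 : ℕ) : ZMod 2) = 1 from by decide,
    show ((Nat.choose 4 1 : ℕ) : ZMod 2) = 0 from by decide,
    show ((Nat.choose 6 0 : ℕ) : ZMod 2) = 1 from by decide,
    show ((Nat.choose 6 1 : ℕ) : ZMod 2) = 0 from by decide,
    one_smul, zero_smul, zero_mul, mul_zero, zero_add, add_zero]
  all_goals ring

lemma hit_aux1 : A.Sq 1 (X 0 ^ 5*X 1 ^ 4*X 2 ^ 6*X 3 ^ 4 : MvPolynomial (Fin 4) (ZMod 2)) =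
      X 0 ^ 6*X 1 ^ 4*X 2 ^ 6*X 3 ^ 4 := by
  simp only [A.cartan, sq_pow A, Finset.Nat.sum_antidiagonal_eq_sum_range_succ_mk,
    Finset.sum_range_succ, Finset.sum_range_zero,
    show ((Nat.choose 4 0 : ℕ) : ZMod 2) = 1 from by decide,
    show ((Nat.choose 4 1 : ℕ) : ZMod 2) = 0 from by decide,
    show ((Nat.choose 5 0 : ℕ) : ZMod 2) = 1 from by decide,
    show ((Nat.choose 5 1 : ℕ) : ZMod 2) = 1 from by decide,
    show ((Nat.choose 6 0 : ℕ) : ZMod 2) = 1 from by decide,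
    show ((Nat.choose 6 1 : ℕ) : ZMod 2) = 0 from by decide,
    one_smul, zero_smul, zero_mul, mul_zero, zero_add, add_zero]
  all_goals ring

lemma hit_aux2 : A.Sq 1 (X 0 ^ 5*X 1 ^ 6*X 2 ^ 4*X 3 ^ 4 : MvPolynomial (Fin 4) (ZMod 2)) =
      X 0 ^ 6*X 1 ^ 6*X 2 ^ 4*X 3 ^ 4 := by
  simp only [A.cartan, sq_pow A, Finset.Nat.sum_antidiagonal_eq_sum_range_succ_mk,
    Finset.sum_range_succ, Finset.sum_range_zero,
    show ((Nat.choose 4 0 : ℕ) : ZMod 2) = 1 from by decide,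
    show ((Nat.choose 4 1 : ℕ) : ZMod 2) = 0 from by decide,
    show ((Nat.choose 5 0 : ℕ) : ZMod 2) = 1 from by decide,
    show ((Nat.choose 5 1 : ℕ) : ZMod 2) = 1 from by decide,
    show ((Nat.choose 6 0 : ℕ) : ZMod 2) = 1 from by decide,
    show ((Nat.choose 6 1 : ℕ) : ZMod 2) = 0 from by decide,
    one_smul, zero_smul, zero_mul, mul_zero, zero_add, add_zero]
  all_goals ring

set_option maxHeartbeats 2000000 in
lemma hit_aux3 : A.Sq 2 (X 0 ^ 3*X 1 ^ 3*X 2 ^ 3*X 3 ^ 9 : MvPolynomial (Fin 4) (ZMod 2)) =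
      X 0 ^ 3*X 1 ^ 3*X 2 ^ 4*X 3 ^ 10
      + X 0 ^ 3*X 1 ^ 3*X 2 ^ 5*X 3 ^ 9
      + X 0 ^ 3*X 1 ^ 4*X 2 ^ 3*X 3 ^ 10
      + X 0 ^ 3*X 1 ^ 4*X 2 ^ 4*X 3 ^ 9
      + X 0 ^ 3*X 1 ^ 5*X 2 ^ 3*X 3 ^ 9
      + X 0 ^ 4*X 1 ^ 3*X 2 ^ 3*X 3 ^ 10
      + X 0 ^ 4*X 1 ^ 3*X 2 ^ 4*X 3 ^ 9
      + X 0 ^ 4*X 1 ^ 4*X 2 ^ 3*X 3 ^ 9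
      + X 0 ^ 5*X 1 ^ 3*X 2 ^ 3*X 3 ^ 9 := by
  simp only [A.cartan, sq_pow A, Finset.Nat.sum_antidiagonal_eq_sum_range_succ_mk,
    Finset.sum_range_succ, Finset.sum_range_zero,
    show ((Nat.choose 3 0 : ℕ) : ZMod 2) = 1 from by decide,
    show ((Nat.choose 3 1 : ℕ) : ZMod 2) = 1 from by decide,
    show ((Nat.choose 3 2 : ℕ) : ZMod 2) = 1 from by decide,
    show ((Nat.choose 9 0 : ℕ) : ZMod 2) = 1 from by decide,
    show ((Nat.choose 9 1 : ℕ) : ZMod 2) = 1 from by decide,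
    show ((Nat.choose 9 2 : ℕ) : ZMod 2) = 0 from by decide,
    one_smul, zero_smul, zero_mul, mul_zero, zero_add, add_zero]
  all_goals ring

set_option maxHeartbeats 2000000 in
lemma hit_aux4 : A.Sq 2 (X 0 ^ 5*X 1 ^ 5*X 2 ^ 5*X 3 ^ 3 : MvPolynomial (Fin 4) (ZMod 2)) =
      X 0 ^ 5*X 1 ^ 5*X 2 ^ 5*X 3 ^ 5
      + X 0 ^ 5*X 1 ^ 5*X 2 ^ 6*X 3 ^ 4
      + X 0 ^ 5*X 1 ^ 6*X 2 ^ 5*X 3 ^ 4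
      + X 0 ^ 5*X 1 ^ 6*X 2 ^ 6*X 3 ^ 3
      + X 0 ^ 6*X 1 ^ 5*X 2 ^ 5*X 3 ^ 4
      + X 0 ^ 6*X 1 ^ 5*X 2 ^ 6*X 3 ^ 3
      + X 0 ^ 6*X 1 ^ 6*X 2 ^ 5*X 3 ^ 3 := by
  simp only [A.cartan, sq_pow A, Finset.Nat.sum_antidiagonal_eq_sum_range_succ_mk,
    Finset.sum_range_succ, Finset.sum_range_zero,
    show ((Nat.choose 3 0 : ℕ) : ZMod 2) = 1 from by decide,
    show ((Nat.choose 3 1 : ℕ) : ZMod 2) = 1 from by decide,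
    show ((Nat.choose 3 2 : ℕ) : ZMod 2) = 1 from by decide,
    show ((Nat.choose 5 0 : ℕ) : ZMod 2) = 1 from by decide,
    show ((Nat.choose 5 1 : ℕ) : ZMod 2) = 1 from by decide,
    show ((Nat.choose 5 2 : ℕ) : ZMod 2) = 0 from by decide,
    one_smul, zero_smul, zero_mul, mul_zero, zero_add, add_zero]
  all_goals ring

set_option maxHeartbeats 2000000 in
lemma hit_aux5 : A.Sq 6 (X 0 ^ 3*X 1 ^ 3*X 2 ^ 3*X 3 ^ 5 : MvPolynomial (Fin 4) (ZMod 2)) =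
      X 0 ^ 3*X 1 ^ 3*X 2 ^ 4*X 3 ^ 10
      + X 0 ^ 3*X 1 ^ 3*X 2 ^ 5*X 3 ^ 9
      + X 0 ^ 3*X 1 ^ 4*X 2 ^ 3*X 3 ^ 10
      + X 0 ^ 3*X 1 ^ 4*X 2 ^ 4*X 3 ^ 9
      + X 0 ^ 3*X 1 ^ 5*X 2 ^ 3*X 3 ^ 9
      + X 0 ^ 3*X 1 ^ 5*X 2 ^ 6*X 3 ^ 6
      + X 0 ^ 3*X 1 ^ 6*X 2 ^ 5*X 3 ^ 6
      + X 0 ^ 3*X 1 ^ 6*X 2 ^ 6*X 3 ^ 5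
      + X 0 ^ 4*X 1 ^ 3*X 2 ^ 3*X 3 ^ 10
      + X 0 ^ 4*X 1 ^ 3*X 2 ^ 4*X 3 ^ 9
      + X 0 ^ 4*X 1 ^ 4*X 2 ^ 3*X 3 ^ 9
      + X 0 ^ 4*X 1 ^ 4*X 2 ^ 6*X 3 ^ 6
      + X 0 ^ 4*X 1 ^ 5*X 2 ^ 5*X 3 ^ 6
      + X 0 ^ 4*X 1 ^ 5*X 2 ^ 6*X 3 ^ 5
      + X 0 ^ 4*X 1 ^ 6*X 2 ^ 4*X 3 ^ 6
      + X 0 ^ 4*X 1 ^ 6*X 2 ^ 5*X 3 ^ 5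
      + X 0 ^ 5*X 1 ^ 3*X 2 ^ 3*X 3 ^ 9
      + X 0 ^ 5*X 1 ^ 3*X 2 ^ 6*X 3 ^ 6
      + X 0 ^ 5*X 1 ^ 4*X 2 ^ 5*X 3 ^ 6
      + X 0 ^ 5*X 1 ^ 4*X 2 ^ 6*X 3 ^ 5
      + X 0 ^ 5*X 1 ^ 5*X 2 ^ 4*X 3 ^ 6
      + X 0 ^ 5*X 1 ^ 5*X 2 ^ 5*X 3 ^ 5
      + X 0 ^ 5*X 1 ^ 6*X 2 ^ 3*X 3 ^ 6
      + X 0 ^ 5*X 1 ^ 6*X 2 ^ 4*X 3 ^ 5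
      + X 0 ^ 6*X 1 ^ 3*X 2 ^ 5*X 3 ^ 6
      + X 0 ^ 6*X 1 ^ 3*X 2 ^ 6*X 3 ^ 5
      + X 0 ^ 6*X 1 ^ 4*X 2 ^ 4*X 3 ^ 6
      + X 0 ^ 6*X 1 ^ 4*X 2 ^ 5*X 3 ^ 5
      + X 0 ^ 6*X 1 ^ 5*X 2 ^ 3*X 3 ^ 6
      + X 0 ^ 6*X 1 ^ 5*X 2 ^ 4*X 3 ^ 5
      + X 0 ^ 6*X 1 ^ 6*X 2 ^ 3*X 3 ^ 5 := by
  simp only [A.cartan, sq_pow A, Finset.Nat.sum_antidiagonal_eq_sum_range_succ_mk,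
    Finset.sum_range_succ, Finset.sum_range_zero,
    show ((Nat.choose 3 0 : ℕ) : ZMod 2) = 1 from by decide,
    show ((Nat.choose 3 1 : ℕ) : ZMod 2) = 1 from by decide,
    show ((Nat.choose 3 2 : ℕ) : ZMod 2) = 1 from by decide,
    show ((Nat.choose 3 3 : ℕ) : ZMod 2) = 1 from by decide,
    show ((Nat.choose 3 4 : ℕ) : ZMod 2) = 0 from by decide,
    show ((Nat.choose 3 5 : ℕ) : ZMod 2) = 0 from by decide,
    show ((Nat.choose 3 6 : ℕ) : ZMod 2) = 0 from by decide,
    show ((Nat.choose 5 0 : ℕ) : ZMod 2) = 1 from by decide,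
    show ((Nat.choose 5 1 : ℕ) : ZMod 2) = 1 from by decide,
    show ((Nat.choose 5 2 : ℕ) : ZMod 2) = 0 from by decide,
    show ((Nat.choose 5 3 : ℕ) : ZMod 2) = 0 from by decide,
    show ((Nat.choose 5 4 : ℕ) : ZMod 2) = 1 from by decide,
    show ((Nat.choose 5 5 : ℕ) : ZMod 2) = 1 from by decide,
    show ((Nat.choose 5 6 : ℕ) : ZMod 2) = 0 from by decide,
    one_smul, zero_smul, zero_mul, mul_zero, zero_add, add_zero]
  all_goals ring

set_option maxHeartbeats 2000000 in
lemma hit_aux6 : A.Sq 8 (X 0 ^ 3*X 1 ^ 3*X 2 ^ 3*X 3 ^ 3 : MvPolynomial (Fin 4) (ZMod 2)) =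
      X 0 ^ 3*X 1 ^ 5*X 2 ^ 6*X 3 ^ 6
      + X 0 ^ 3*X 1 ^ 6*X 2 ^ 5*X 3 ^ 6
      + X 0 ^ 3*X 1 ^ 6*X 2 ^ 6*X 3 ^ 5
      + X 0 ^ 4*X 1 ^ 4*X 2 ^ 6*X 3 ^ 6
      + X 0 ^ 4*X 1 ^ 5*X 2 ^ 5*X 3 ^ 6
      + X 0 ^ 4*X 1 ^ 5*X 2 ^ 6*X 3 ^ 5
      + X 0 ^ 4*X 1 ^ 6*X 2 ^ 4*X 3 ^ 6
      + X 0 ^ 4*X 1 ^ 6*X 2 ^ 5*X 3 ^ 5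
      + X 0 ^ 4*X 1 ^ 6*X 2 ^ 6*X 3 ^ 4
      + X 0 ^ 5*X 1 ^ 3*X 2 ^ 6*X 3 ^ 6
      + X 0 ^ 5*X 1 ^ 4*X 2 ^ 5*X 3 ^ 6
      + X 0 ^ 5*X 1 ^ 4*X 2 ^ 6*X 3 ^ 5
      + X 0 ^ 5*X 1 ^ 5*X 2 ^ 4*X 3 ^ 6
      + X 0 ^ 5*X 1 ^ 5*X 2 ^ 5*X 3 ^ 5
      + X 0 ^ 5*X 1 ^ 5*X 2 ^ 6*X 3 ^ 4
      + X 0 ^ 5*X 1 ^ 6*X 2 ^ 3*X 3 ^ 6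
      + X 0 ^ 5*X 1 ^ 6*X 2 ^ 4*X 3 ^ 5
      + X 0 ^ 5*X 1 ^ 6*X 2 ^ 5*X 3 ^ 4
      + X 0 ^ 5*X 1 ^ 6*X 2 ^ 6*X 3 ^ 3
      + X 0 ^ 6*X 1 ^ 3*X 2 ^ 5*X 3 ^ 6
      + X 0 ^ 6*X 1 ^ 3*X 2 ^ 6*X 3 ^ 5
      + X 0 ^ 6*X 1 ^ 4*X 2 ^ 4*X 3 ^ 6
      + X 0 ^ 6*X 1 ^ 4*X 2 ^ 5*X 3 ^ 5
      + X 0 ^ 6*X 1 ^ 4*X 2 ^ 6*X 3 ^ 4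
      + X 0 ^ 6*X 1 ^ 5*X 2 ^ 3*X 3 ^ 6
      + X 0 ^ 6*X 1 ^ 5*X 2 ^ 4*X 3 ^ 5
      + X 0 ^ 6*X 1 ^ 5*X 2 ^ 5*X 3 ^ 4
      + X 0 ^ 6*X 1 ^ 5*X 2 ^ 6*X 3 ^ 3
      + X 0 ^ 6*X 1 ^ 6*X 2 ^ 3*X 3 ^ 5
      + X 0 ^ 6*X 1 ^ 6*X 2 ^ 4*X 3 ^ 4
      + X 0 ^ 6*X 1 ^ 6*X 2 ^ 5*X 3 ^ 3 := by
  simp only [A.cartan, sq_pow A, Finset.Nat.sum_antidiagonal_eq_sum_range_succ_mk,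
    Finset.sum_range_succ, Finset.sum_range_zero,
    show ((Nat.choose 3 0 : ℕ) : ZMod 2) = 1 from by decide,
    show ((Nat.choose 3 1 : ℕ) : ZMod 2) = 1 from by decide,
    show ((Nat.choose 3 2 : ℕ) : ZMod 2) = 1 from by decide,
    show ((Nat.choose 3 3 : ℕ) : ZMod 2) = 1 from by decide,
    show ((Nat.choose 3 4 : ℕ) : ZMod 2) = 0 from by decide,
    show ((Nat.choose 3 5 : ℕ) : ZMod 2) = 0 from by decide,
    show ((Nat.choose 3 6 : ℕ) : ZMod 2) = 0 from by decide,
    show ((Nat.choose 3 7 : ℕ) : ZMod 2) = 0 from by decide,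
    show ((Nat.choose 3 8 : ℕ) : ZMod 2) = 0 from by decide,
    one_smul, zero_smul, zero_mul, mul_zero, zero_add, add_zero]
  all_goals ring

set_option maxRecDepth 10000 in
set_option maxHeartbeats 4000000 in
lemma key_ring (R : Type) [CommRing R] (h2 : (2:R) = 0) (x y z w : R) :
    x^5*y^5*z^5*w^5 = (x^4*y^6*z^6*w^4) + (x^6*y^4*z^6*w^4) + (x^6*y^6*z^4*w^4) + (x^3*y^3*z^4*w^10 + x^3*y^3*z^5*w^9 + x^3*y^4*z^3*w^10 + x^3*y^4*z^4*w^9 + x^3*y^5*z^3*w^9 + x^4*y^3*z^3*w^10 + x^4*y^3*z^4*w^9 + x^4*y^4*z^3*w^9 + x^5*y^3*z^3*w^9) + (x^5*y^5*z^5*w^5 + x^5*y^5*z^6*w^4 + x^5*y^6*z^5*w^4 + x^5*y^6*z^6*w^3 + x^6*y^5*z^5*w^4 + x^6*y^5*z^6*w^3 + x^6*y^6*z^5*w^3) + (x^3*y^3*z^4*w^10 + x^3*y^3*z^5*w^9 + x^3*y^4*z^3*w^10 + x^3*y^4*z^4*w^9 + x^3*y^5*z^3*w^9 + x^3*y^5*z^6*w^6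 + x^3*y^6*z^5*w^6 + x^3*y^6*z^6*w^5 + x^4*y^3*z^3*w^10 + x^4*y^3*z^4*w^9 + x^4*y^4*z^3*w^9 + x^4*y^4*z^6*w^6 + x^4*y^5*z^5*w^6 + x^4*y^5*z^6*w^5 + x^4*y^6*z^4*w^6 + x^4*y^6*z^5*w^5 + x^5*y^3*z^3*w^9 + x^5*y^3*z^6*w^6 + x^5*y^4*z^5*w^6 + x^5*y^4*z^6*w^5 + x^5*y^5*z^4*w^6 + x^5*y^5*z^5*w^5 + x^5*y^6*z^3*w^6 + x^5*y^6*z^4*w^5 + x^6*y^3*z^5*w^6 + x^6*y^3*z^6*w^5 + x^6*y^4*z^4*w^6 + x^6*y^4*z^5*w^5 + x^6*y^5*z^3*w^6 + x^6*y^5*z^4*w^5 + x^6*y^6*z^3*w^5) + (x^3*y^5*z^6*w^6 + x^3*y^6*z^5*w^6 + x^3*y^6*z^6*w^5 + x^4*y^4*z^6*w^6 + x^4*y^5*z^5*w^6 + x^4*y^5*z^6*w^5 + x^4*y^6*z^4*w^6 + x^4*y^6*z^5*w^5 + x^4*y^6*z^6*w^4 + x^5*y^3*z^6*w^6 + x^5*y^4*z^5*w^6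 + x^5*y^4*z^6*w^5 + x^5*y^5*z^4*w^6 + x^5*y^5*z^5*w^5 + x^5*y^5*z^6*w^4 + x^5*y^6*z^3*w^6 + x^5*y^6*z^4*w^5 + x^5*y^6*z^5*w^4 + x^5*y^6*z^6*w^3 + x^6*y^3*z^5*w^6 + x^6*y^3*z^6*w^5 + x^6*y^4*z^4*w^6 + x^6*y^4*z^5*w^5 + x^6*y^4*z^6*w^4 + x^6*y^5*z^3*w^6 + x^6*y^5*z^4*w^5 + x^6*y^5*z^5*w^4 + x^6*y^5*z^6*w^3 + x^6*y^6*z^3*w^5 + x^6*y^6*z^4*w^4 + x^6*y^6*z^5*w^3) := by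
  linear_combination (-(x^3*y^3*z^4*w^10 + x^3*y^3*z^5*w^9 + x^3*y^4*z^3*w^10 + x^3*y^4*z^4*w^9 + x^3*y^5*z^3*w^9 + x^3*y^5*z^6*w^6 + x^3*y^6*z^5*w^6 + x^3*y^6*z^6*w^5 + x^4*y^3*z^3*w^10 + x^4*y^3*z^4*w^9 + x^4*y^4*z^3*w^9 + x^4*y^4*z^6*w^6 + x^4*y^5*z^5*w^6 + x^4*y^5*z^6*w^5 + x^4*y^6*z^4*w^6 + x^4*y^6*z^5*w^5 + x^4*y^6*z^6*w^4 + x^5*y^3*z^3*w^9 + x^5*y^3*z^6*w^6 + x^5*y^4*z^5*w^6 + x^5*y^4*z^6*w^5 + x^5*y^5*z^4*w^6 + x^5*y^5*z^5*w^5 + x^5*y^5*z^6*w^4 + x^5*y^6*z^3*w^6 + x^5*y^6*z^4*w^5 + x^5*y^6*z^5*w^4 + x^5*y^6*z^6*w^3 + x^6*y^3*z^5*w^6 + x^6*y^3*z^6*w^5 + x^6*y^4*z^4*w^6 + x^6*y^4*z^5*w^5 + x^6*y^4*z^6*w^4 + x^6*y^5*z^3*w^6 + x^6*y^5*z^4*w^5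 + x^6*y^5*z^5*w^4 + x^6*y^5*z^6*w^3 + x^6*y^6*z^3*w^5 + x^6*y^6*z^4*w^4 + x^6*y^6*z^5*w^3)) * h2

end

theorem stmt10 (A : SteenrodAction 4) :
    A.IsHit (X 0 ^ 5 * X 1 ^ 5 * X 2 ^ 5 * X 3 ^ 5) := by
  have h2 : (2 : MvPolynomial (Fin 4) (ZMod 2)) = 0 := by
    exact_mod_cast CharP.cast_eq_zero (MvPolynomial (Fin 4) (ZMod 2)) 2
  have key := key_ring (MvPolynomial (Fin 4) (ZMod 2)) h2 (X 0) (X 1) (X 2) (X 3)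
  rw [← hit_aux6 A, ← hit_aux5 A, ← hit_aux4 A, ← hit_aux3 A, ← hit_aux0 A,
    ← hit_aux1 A, ← hit_aux2 A] at key
  rw [SteenrodAction.IsHit, key]
  have mem : ∀ (k : ℕ), 0 < k → ∀ u, A.Sq k u ∈
      Submodule.span (ZMod 2) {q : MvPolynomial (Fin 4) (ZMod 2) | ∃ i, 0 < i ∧ ∃ u, q = A.Sq i u} :=
    fun k hk u => Submodule.subset_span ⟨k, hk, u, rfl⟩
  refine Submodule.add_mem _ (Submodule.add_mem _ (Submodule.add_mem _ (Submodule.add_mem _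
    (Submodule.add_mem _ (Submodule.add_mem _ (mem 1 one_pos _) (mem 1 one_pos _))
    (mem 1 one_pos _)) (mem 2 two_pos _)) (mem 2 two_pos _)) (mem 6 (by norm_num) _))
    (mem 8 (by norm_num) _)
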